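/- Let Ω = {(x,y) ∈ ℝ² : x² - 1 < y < 1 - x²}. The function u(x,y) = 2xy for y > 0 and u(x,y) = 0 for y ≤ 0 agrees on ∂Ω with the smooth function φ(x,y) = x(y - x² + 1), is Lipschitz on Ω but not C¹ (it fails to be differentiable across {y = 0} where x ≠ 0). -/

import Mathlib

open Set

/-- Let `Ω = {(x,y) ∈ ℝ² : x² - 1 < y < 1 - x²}`.  The function `u(x,y) = 2xy`
for `y > 0` and `u(x,y) = 0` for `y ≤ 0` agrees on `∂Ω` with the smooth function
`φ(x,y) = x(y - x² + 1)`, is Lipschitz on `Ω`, but fails to be differentiable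
at the points `(x,0)` with `x ≠ 0`. -/
theorem sharp_example_H1 :
    let Ω : Set (ℝ × ℝ) := {p | p.1 ^ 2 - 1 < p.2 ∧ p.2 < 1 - p.1 ^ 2}
    let u : ℝ × ℝ → ℝ := fun p => if 0 < p.2 then 2 * p.1 * p.2 else 0
    let φ : ℝ × ℝ → ℝ := fun p => p.1 * (p.2 - p.1 ^ 2 + 1)
    (∀ p ∈ frontier Ω, u p = φ p) ∧
    (∃ K : NNReal, LipschitzOnWith K u Ω) ∧
    (∀ x : ℝ, x ≠ 0 → ¬ DifferentiableAt ℝ u (x, 0)) := by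
  intro Ω u φ
  have hux : ∀ r : ℝ × ℝ, u r = 2 * r.1 * max r.2 0 := by
    intro r
    by_cases h : 0 < r.2
    · simp [u, h, max_eq_left h.le]
    · simp [u, h, max_eq_right (not_lt.mp h)]
  refine ⟨?_, ?_, ?_⟩
  · -- boundary agreement
    intro p hp
    have hc1 : Continuous fun q : ℝ × ℝ => q.1 ^ 2 - 1 := by fun_prop
    have hc2 : Continuous fun q : ℝ × ℝ => 1 - q.1 ^ 2 := by fun_prop
    have hopen : IsOpen Ω := (isOpen_lt hc1 continuous_snd).inter (isOpen_lt continuous_snd hc2)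
    have hcl : closure Ω ⊆ {q : ℝ × ℝ | q.1 ^ 2 - 1 ≤ q.2 ∧ q.2 ≤ 1 - q.1 ^ 2} := by
      apply closure_minimal
      · intro q hq; exact ⟨hq.1.le, hq.2.le⟩
      · exact (isClosed_le hc1 continuous_snd).inter (isClosed_le continuous_snd hc2)
    have h1 : p ∈ closure Ω := frontier_subset_closure hp
    have h2 : p ∉ Ω := fun hmem => hp.2 (by rw [hopen.interior_eq]; exact hmem)
    obtain ⟨hle1, hle2⟩ := hcl h1
    have hcases : p.2 = p.1 ^ 2 - 1 ∨ p.2 = 1 - p.1 ^ 2 := by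
      by_contra hcon
      push_neg at hcon
      exact h2 ⟨lt_of_le_of_ne hle1 (Ne.symm hcon.1), lt_of_le_of_ne hle2 hcon.2⟩
    obtain ⟨a, b⟩ := p
    dsimp only at hle1 hle2 hcases
    show u (a, b) = φ (a, b)
    simp only [u, φ]
    rcases hcases with hb | hb <;> subst hb
    · -- lower arc
      have hneg : ¬ 0 < a ^ 2 - 1 := by nlinarith [hle2]
      rw [if_neg hneg]; ring
    · -- upper arc
      by_cases hpos : 0 < 1 - a ^ 2
      · rw [if_pos hpos]; ring
      · have ha2 : a ^ 2 = 1 := by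
          push_neg at hpos
          nlinarith [hle1]
        rw [if_neg hpos]
        linear_combination 2 * a * ha2
  · -- Lipschitz
    refine ⟨4, ?_⟩
    rw [lipschitzOnWith_iff_dist_le_mul]
    intro p hp q hq
    have hboundx : ∀ r : ℝ × ℝ, r ∈ Ω → |r.1| ≤ 1 := by
      intro r hr
      rw [abs_le]
      constructor <;> nlinarith [hr.1, hr.2]
    have hboundy : ∀ r : ℝ × ℝ, r ∈ Ω → |max r.2 0| ≤ 1 := by
      intro r hr
      rw [abs_le]
      refine ⟨by nlinarith [le_max_right r.2 (0:ℝ)], max_le (by nlinarith [hr.1, hr.2]) one_pos.le⟩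
    rw [hux, hux, Real.dist_eq, Prod.dist_eq, Real.dist_eq, Real.dist_eq]
    set a₁ := p.1; set b₁ := p.2; set a₂ := q.1; set b₂ := q.2
    set m₁ := max b₁ (0:ℝ); set m₂ := max b₂ (0:ℝ)
    have hm : |m₁ - m₂| ≤ |b₁ - b₂| := abs_max_sub_max_le_abs _ _ _
    have key : |2 * a₁ * m₁ - 2 * a₂ * m₂| ≤ 2 * |a₁| * |m₁ - m₂| + 2 * |m₂| * |a₁ - a₂| := by
      have he : 2 * a₁ * m₁ - 2 * a₂ * m₂ = 2 * a₁ * (m₁ - m₂) + 2 * m₂ * (a₁ - a₂) := by ring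
      rw [he]
      calc |2 * a₁ * (m₁ - m₂) + 2 * m₂ * (a₁ - a₂)|
          ≤ |2 * a₁ * (m₁ - m₂)| + |2 * m₂ * (a₁ - a₂)| := abs_add_le _ _
        _ = 2 * |a₁| * |m₁ - m₂| + 2 * |m₂| * |a₁ - a₂| := by
            simp [abs_mul, abs_of_nonneg, mul_assoc]
    have ha1 : |a₁| ≤ 1 := hboundx p hp
    have hm2 : |m₂| ≤ 1 := hboundy q hq
    have hM1 : |a₁ - a₂| ≤ max |a₁ - a₂| |b₁ - b₂| := le_max_left _ _
    have hM2 : |b₁ - b₂| ≤ max |a₁ - a₂| |b₁ - b₂| := le_max_right _ _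
    have h4 : ((4 : NNReal) : ℝ) = 4 := by norm_num
    rw [h4]
    nlinarith [key, hm, ha1, hm2, hM1, hM2, abs_nonneg (a₁ - a₂), abs_nonneg (b₁ - b₂),
      abs_nonneg (m₁ - m₂), abs_nonneg a₁, abs_nonneg m₂]
  · -- non-differentiability
    intro x hx h
    have hc : DifferentiableAt ℝ (fun t : ℝ => u (x, t)) 0 :=
      h.comp 0 ((differentiableAt_const x).prodMk differentiableAt_id)
    have habs : DifferentiableAt ℝ (fun t : ℝ => |t|) 0 := by
      have heq : (fun t : ℝ => |t|) = fun t : ℝ => u (x, t) * x⁻¹ - t := by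
        funext t
        by_cases ht : 0 < t
        · simp only [u, ht, ite_true]
          rw [abs_of_pos ht]
          field_simp
          ring
        · simp only [u, ht, ite_false]
          rw [abs_of_nonpos (not_lt.mp ht)]
          ring
      rw [heq]
      exact (hc.mul (differentiableAt_const _)).sub differentiableAt_id
    exact not_differentiableAt_abs_zero habs
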